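/- Let α ∈ (0,1), ψ(i,j) = Γ(i+1)/Γ(i+1−α) + Γ(j+1)/Γ(j+1−α) − Γ(i+j+1)/Γ(i+j+1−α), and φ(i,j) = Γ(i+1)/Γ(i+2−α) − Γ(i+j+1)/Γ(i+j+2−α). Then for all i, j ≥ 1, ψ(i,j) = ψ(1,1) − α φ(0,1) + α Σ_{k=0}^{i−1} Σ_{l=0}^{j−1} φ(k+l, 1). -/
import Mathlib


noncomputable def phi (α : ℝ) (i j : ℕ) : ℝ :=
  Real.Gamma ((i : ℝ) + 1) / Real.Gamma ((i : ℝ) + 2 - α)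
    - Real.Gamma ((i : ℝ) + (j : ℝ) + 1) / Real.Gamma ((i : ℝ) + (j : ℝ) + 2 - α)

noncomputable def psi (α : ℝ) (i j : ℕ) : ℝ :=
  Real.Gamma ((i : ℝ) + 1) / Real.Gamma ((i : ℝ) + 1 - α)
    + Real.Gamma ((j : ℝ) + 1) / Real.Gamma ((j : ℝ) + 1 - α)
    - Real.Gamma ((i : ℝ) + (j : ℝ) + 1) / Real.Gamma ((i : ℝ) + (j : ℝ) + 1 - α)

noncomputable def gg (α : ℝ) (n : ℕ) : ℝ :=
  Real.Gamma ((n : ℝ) + 1) / Real.Gamma ((n : ℝ) + 1 - α)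

noncomputable def hh (α : ℝ) (n : ℕ) : ℝ :=
  Real.Gamma ((n : ℝ) + 1) / Real.Gamma ((n : ℝ) + 2 - α)

lemma gg_succ (α : ℝ) (hα : α ∈ Set.Ioo (0:ℝ) 1) (n : ℕ) :
    gg α (n + 1) = gg α n + α * hh α n := by
  obtain ⟨h0, h1⟩ := hα
  unfold gg hh
  push_cast
  have hBpos : 0 < Real.Gamma ((n : ℝ) + 1 - α) := by
    apply Real.Gamma_pos_of_pos
    have : (0:ℝ) ≤ (n:ℝ) := Nat.cast_nonneg n
    linarith
  have hA : Real.Gamma ((n : ℝ) + 1 + 1) = ((n:ℝ) + 1) * Real.Gamma ((n:ℝ) + 1) := by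
    rw [Real.Gamma_add_one]
    positivity
  have hB : Real.Gamma ((n : ℝ) + 1 + 1 - α) = ((n:ℝ) + 1 - α) * Real.Gamma ((n:ℝ) + 1 - α) := by
    have : (n : ℝ) + 1 + 1 - α = ((n:ℝ) + 1 - α) + 1 := by ring
    rw [this, Real.Gamma_add_one]
    have : (0:ℝ) ≤ (n:ℝ) := Nat.cast_nonneg n
    intro h; nlinarith
  have hc : (n : ℝ) + 2 - α = (n : ℝ) + 1 + 1 - α := by ring
  rw [hA, hB, hc, hB]
  have h2 : ((n:ℝ) + 1 - α) ≠ 0 := by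
    have : (0:ℝ) ≤ (n:ℝ) := Nat.cast_nonneg n
    intro h; nlinarith
  field_simp
  ring

lemma gg_sum (α : ℝ) (hα : α ∈ Set.Ioo (0:ℝ) 1) (n : ℕ) :
    gg α n = gg α 0 + α * ∑ k ∈ Finset.range n, hh α k := by
  induction n with
  | zero => simp
  | succ m ih =>
      rw [gg_succ α hα, ih, Finset.sum_range_succ]
      ring

lemma phi_eq (α : ℝ) (m : ℕ) : phi α m 1 = hh α m - hh α (m + 1) := by
  unfold phi hh
  push_cast
  norm_num

lemma innerTelescope (α : ℝ) (k j : ℕ) :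
    ∑ l ∈ Finset.range j, phi α (k + l) 1 = hh α k - hh α (k + j) := by
  have : ∀ l ∈ Finset.range j, phi α (k + l) 1
      = (fun l => hh α (k + l)) l - (fun l => hh α (k + l)) (l + 1) := by
    intro l _
    simp only []
    rw [phi_eq, Nat.add_assoc]
  rw [Finset.sum_congr rfl this, Finset.sum_range_sub' (fun l => hh α (k + l)) j]
  simp

lemma psi_eq (α : ℝ) (i j : ℕ) : psi α i j = gg α i + gg α j - gg α (i + j) := by
  unfold psi gg
  push_cast
  ring_nf

/-- The double-sum representation of ψ. -/
theorem psi_double_sum (α : ℝ) (hα : α ∈ Set.Ioo (0:ℝ) 1) (i j : ℕ)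
    (hi : 1 ≤ i) (hj : 1 ≤ j) :
    psi α i j = psi α 1 1 - α * phi α 0 1
      + α * ∑ k ∈ Finset.range i, ∑ l ∈ Finset.range j, phi α (k + l) 1 := by
  have hsum : ∑ k ∈ Finset.range i, ∑ l ∈ Finset.range j, phi α (k + l) 1
      = ∑ k ∈ Finset.range i, (hh α k - hh α (k + j)) := by
    exact Finset.sum_congr rfl fun k _ => innerTelescope α k j
  rw [hsum, psi_eq, psi_eq, phi_eq α 0]
  rw [gg_sum α hα i, gg_sum α hα j, gg_sum α hα (i + j)]
  have hrec1 : gg α 1 = gg α 0 + α * hh α 0 := gg_succ α hα 0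
  have hrec2 : gg α 2 = gg α 1 + α * hh α 1 := gg_succ α hα 1
  have hsplit : ∑ k ∈ Finset.range (i + j), hh α k
      = ∑ k ∈ Finset.range j, hh α k + ∑ k ∈ Finset.range i, hh α (k + j) := by
    rw [add_comm i j, Finset.sum_range_add]
    congr 1
    exact Finset.sum_congr rfl fun k _ => by rw [add_comm]
  rw [hsplit, Finset.sum_sub_distrib]
  have h11 : (1 : ℕ) + 1 = 2 := rfl
  rw [h11, hrec2, hrec1]
  ring
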